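/- Let Φ = (G, φ) be a T-gain graph on a complete bipartite graph G. If there exists a vertex v such that every 4-cycle passing through v has gain 1, then Φ is balanced. -/

import Mathlib

open Matrix BigOperators
open scoped Classical ComplexOrder

/-- The positive semidefinite square root of a positive semidefinite matrix
(the definition Mathlib had in December 2024, since removed). -/
noncomputable def Matrix.PosSemidef.sqrt {n 𝕜 : Type*} [Fintype n] [DecidableEq n] [RCLike 𝕜]
    {A : Matrix n n 𝕜} (hA : A.PosSemidef) : Matrix n n 𝕜 :=
  hA.1.eigenvectorUnitary.1 * diagonal ((↑) ∘ (fun x : ℝ => √x) ∘ hA.1.eigenvalues) *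
  (star hA.1.eigenvectorUnitary : Matrix n n 𝕜)

/-- A complex unit gain graph (`𝕋`-gain graph) on a finite vertex type `V`. -/
structure TGainGraph (V : Type*) [Fintype V] [DecidableEq V] where
  G : SimpleGraph V
  A : Matrix V V ℂ
  herm : A.IsHermitian
  unitGain : ∀ i j, G.Adj i j → ‖A i j‖ = 1
  zeroGain : ∀ i j, ¬ G.Adj i j → A i j = 0

namespace TGainGraph

variable {V : Type*} [Fintype V] [DecidableEq V]

/-- The energy of a `𝕋`-gain graph: sum of absolute values of eigenvalues of `A(Φ)`. -/
noncomputable def energy (Φ : TGainGraph V) : ℝ :=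
  ∑ i, |Φ.herm.eigenvalues i|

/-- `|A(Φ)| = (A(Φ) A(Φ)ᴴ)^{1/2}`. -/
noncomputable def absMatrix (Φ : TGainGraph V) : Matrix V V ℂ :=
  (Matrix.posSemidef_self_mul_conjTranspose Φ.A).sqrt

/-- Energy of a vertex: the `(i,i)` entry of `|A(Φ)|`. -/
noncomputable def vertexEnergy (Φ : TGainGraph V) (i : V) : ℝ :=
  (Φ.absMatrix i i).re

/-- Degree of a vertex in the underlying graph. -/
noncomputable def deg (Φ : TGainGraph V) (i : V) : ℕ := Φ.G.degree i

/-- Maximum vertex degree of the underlying graph. -/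
noncomputable def maxDeg (Φ : TGainGraph V) : ℕ := Φ.G.maxDegree

/-- Spectral radius of `A(Φ)`. -/
noncomputable def specRadius (Φ : TGainGraph V) : ℝ :=
  ⨆ i, |Φ.herm.eigenvalues i|

/-- Switching equivalence of two gain graphs on the same vertex set: same
underlying graph, and adjacency matrices conjugate by a diagonal unitary. -/
def SwitchEquiv (Φ₁ Φ₂ : TGainGraph V) : Prop :=
  Φ₁.G = Φ₂.G ∧ ∃ U : Matrix V V ℂ, U.IsDiag ∧ U ∈ Matrix.unitaryGroup V ℂ ∧
    Φ₁.A = U * Φ₂.A * Uᴴ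

/-- `Φ` switches to the all-ones gain on its underlying graph,
i.e. `Φ ∼ (G, 1)` (equivalently, `Φ` is balanced). -/
def SwitchesToOne (Φ : TGainGraph V) : Prop :=
  ∃ U : Matrix V V ℂ, U.IsDiag ∧ U ∈ Matrix.unitaryGroup V ℂ ∧
    Φ.A = U * (Φ.G.adjMatrix ℂ) * Uᴴ

/-- `Φ ∼ (K_{a,b}, 1)`: the underlying graph is (isomorphic to) the complete
bipartite graph `K_{a,b}` via some bijection `e`, and the gains switch to `1`. -/
def SwitchEquivToCompleteBipartite (Φ : TGainGraph V) (a b : ℕ) : Prop :=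
  (∃ e : V ≃ (Fin a ⊕ Fin b), ∀ i j, Φ.G.Adj i j ↔
      (completeBipartiteGraph (Fin a) (Fin b)).Adj (e i) (e j)) ∧
  SwitchesToOne Φ

/-- The gain of a walk: the product of the gains of its edges in order. -/
noncomputable def walkGain (Φ : TGainGraph V) {u v : V} (w : Φ.G.Walk u v) : ℂ :=
  (w.darts.map (fun d => Φ.A d.fst d.snd)).prod

/-- A gain graph is balanced if every cycle has gain `1`. -/
def Balanced (Φ : TGainGraph V) : Prop :=
  ∀ (u : V) (w : Φ.G.Walk u u), w.IsCycle → Φ.walkGain w = 1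

/-- The restriction of a gain graph to a set of vertices. -/
noncomputable def restrict (Φ : TGainGraph V) (s : Set V) : TGainGraph s where
  G := Φ.G.induce s
  A := Φ.A.submatrix (Subtype.val) (Subtype.val)
  herm := Φ.herm.submatrix _
  unitGain := fun i j h => Φ.unitGain i j h
  zeroGain := fun i j h => Φ.zeroGain i j h

/-- The vertex set of the connected component `c`. -/
def componentSet (Φ : TGainGraph V) (c : Φ.G.ConnectedComponent) : Set V :=
  {v | Φ.G.connectedComponentMk v = c}

/-- Every connected component of `Φ` is either an isolated vertex or a balanced
complete bipartite gain graph `(K_{k,k},1)` with a perfect matching. -/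
def ComponentsBalancedCompleteBipartitePM (Φ : TGainGraph V) : Prop :=
  ∀ c : Φ.G.ConnectedComponent,
    (∀ v ∈ Φ.componentSet c, ∀ w, ¬ Φ.G.Adj v w) ∨
    ∃ k : ℕ, 0 < k ∧
      (Φ.restrict (Φ.componentSet c)).SwitchEquivToCompleteBipartite k k

/-- The matching number of a graph. -/
noncomputable def matchingNumber (G : SimpleGraph V) : ℕ :=
  sSup {k | ∃ M : G.Subgraph, M.IsMatching ∧ M.edgeSet.ncard = k}

/-- The vertex cover number of a graph. -/
noncomputable def coverNumber (G : SimpleGraph V) : ℕ :=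
  sInf {k | ∃ s : Finset V, s.card = k ∧ ∀ i j, G.Adj i j → i ∈ s ∨ j ∈ s}

/-- The number of odd cycles of a graph (counted by their edge sets). -/
noncomputable def oddCycleCount (G : SimpleGraph V) : ℕ :=
  Set.ncard {s : Set (Sym2 V) | ∃ (u : V) (w : G.Walk u u),
    w.IsCycle ∧ Odd w.length ∧ s = {e | e ∈ w.edges}}

end TGainGraph

open ComplexConjugate

open TGainGraph in
/-- If `G` is complete bipartite and every 4-cycle through some fixed vertex `v`
has gain 1, then `Φ` is balanced. -/
theorem balanced_of_four_cycles_through_vertex {V : Type*} [Fintype V] [DecidableEq V]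
    (Φ : TGainGraph V) (a b : ℕ)
    (hcb : ∃ e : V ≃ (Fin a ⊕ Fin b), ∀ i j, Φ.G.Adj i j ↔
      (completeBipartiteGraph (Fin a) (Fin b)).Adj (e i) (e j))
    (v : V)
    (h4 : ∀ w : Φ.G.Walk v v, w.IsCycle → w.length = 4 → Φ.walkGain w = 1) :
    Φ.Balanced := by
  obtain ⟨e, he⟩ := hcb
  set sd : V → Bool := fun x => (e x).isLeft with hsd
  have hadj : ∀ i j, Φ.G.Adj i j ↔ sd i ≠ sd j := by
    intro i j
    rw [he]
    cases h1 : e i <;> cases h2 : e j <;> simp [hsd, h1, h2]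
  intro u w hw
  obtain ⟨x0, q0, hx0⟩ : ∃ p q, Φ.G.Adj p q := by
    cases w with
    | nil => exact absurd rfl hw.ne_nil
    | cons h w' => exact ⟨_, _, h⟩
  obtain ⟨y₀, hy₀⟩ : ∃ y, sd y ≠ sd v := by
    have hne := (hadj _ _).1 hx0
    by_cases h : sd x0 = sd v
    · exact ⟨q0, by rw [← h]; exact Ne.symm hne⟩
    · exact ⟨x0, h⟩
  have hvy₀ : Φ.G.Adj v y₀ := (hadj _ _).2 (fun h => hy₀ h.symm)
  set θ : V → ℂ := fun x => if sd x = sd v then Φ.A x y₀ * conj (Φ.A v y₀)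
    else conj (Φ.A v x) with hθ
  have hθabs : ∀ x, θ x * conj (θ x) = 1 := by
    intro x
    have habs : ‖θ x‖ = 1 := by
      by_cases h : sd x = sd v
      · have hx : Φ.G.Adj x y₀ := (hadj _ _).2 (by rw [h]; exact Ne.symm hy₀)
        simp [hθ, h, _root_.map_mul, Φ.unitGain x y₀ hx, Φ.unitGain v y₀ hvy₀]
      · have hx : Φ.G.Adj v x := (hadj _ _).2 (fun hh => h hh.symm)
        simp [hθ, h, Φ.unitGain v x hx]
    rw [Complex.mul_conj, ← Complex.sq_norm, habs]
    norm_num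
  have helper : ∀ p q, sd p = sd v → Φ.G.Adj p q →
      Φ.A p q = θ p * conj (θ q) := by
    intro p q hp hpq
    have hq : sd q ≠ sd v := by rw [← hp]; exact Ne.symm ((hadj p q).1 hpq)
    have hθp : θ p = Φ.A p y₀ * conj (Φ.A v y₀) := by simp [hθ, hp]
    have hθq : conj (θ q) = Φ.A v q := by simp [hθ, hq]
    rw [hθp, hθq]
    by_cases hpv : p = v
    · rw [hpv]
      have u1 : Φ.A v y₀ * conj (Φ.A v y₀) = 1 := by
        rw [Complex.mul_conj, ← Complex.sq_norm, Φ.unitGain v y₀ hvy₀]; norm_num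
      rw [u1, one_mul]
    · by_cases hqy : q = y₀
      · rw [hqy]
        have u1 : conj (Φ.A v y₀) * Φ.A v y₀ = 1 := by
          rw [mul_comm, Complex.mul_conj, ← Complex.sq_norm, Φ.unitGain v y₀ hvy₀]
          norm_num
        calc Φ.A p y₀ = Φ.A p y₀ * (conj (Φ.A v y₀) * Φ.A v y₀) := by rw [u1, mul_one]
          _ = Φ.A p y₀ * conj (Φ.A v y₀) * Φ.A v y₀ := by ring
      · -- genuine 4-cycle v → q → p → y₀ → v
        have hvq : Φ.G.Adj v q := (hadj _ _).2 (fun h => hq h.symm)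
        have hqp : Φ.G.Adj q p := hpq.symm
        have hpy : Φ.G.Adj p y₀ := (hadj _ _).2 (by rw [hp]; exact Ne.symm hy₀)
        have hyv : Φ.G.Adj y₀ v := hvy₀.symm
        set c : Φ.G.Walk v v :=
          .cons hvq (.cons hqp (.cons hpy (.cons hyv .nil))) with hc
        have hcyc : c.IsCycle := by
          rw [SimpleGraph.Walk.isCycle_def]
          refine ⟨⟨?_⟩, by simp [hc], ?_⟩
          all_goals
            have n1 : q ≠ p := hqp.ne
            have n2 : v ≠ q := hvq.ne
            have n3 : p ≠ y₀ := hpy.ne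
            have n4 : y₀ ≠ v := hyv.ne
          · simp [hc, Sym2.eq_iff]
            tauto
          · simp [hc]
            tauto
        have hlen : c.length = 4 := by simp [hc]
        have hgain := h4 c hcyc hlen
        have hgain' : Φ.A v q * (Φ.A q p * (Φ.A p y₀ * Φ.A y₀ v)) = 1 := by
          simpa [TGainGraph.walkGain, hc] using hgain
        have h1 : Φ.A q p = conj (Φ.A p q) := by
          rw [starRingEnd_apply]; exact (Φ.herm.apply q p).symm
        have h2 : Φ.A y₀ v = conj (Φ.A v y₀) := by
          rw [starRingEnd_apply]; exact (Φ.herm.apply y₀ v).symm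
        rw [h1, h2] at hgain'
        have u1 : Φ.A p q * conj (Φ.A p q) = 1 := by
          rw [Complex.mul_conj, ← Complex.sq_norm, Φ.unitGain p q hpq]; norm_num
        linear_combination (-Φ.A p q) * hgain' +
          (Φ.A p y₀ * conj (Φ.A v y₀) * Φ.A v q) * u1
  have hA : ∀ p q, Φ.G.Adj p q → Φ.A p q = θ p * conj (θ q) := by
    intro p q hpq
    by_cases hp : sd p = sd v
    · exact helper p q hp hpq
    · have hq : sd q = sd v := by
        have hne : sd p ≠ sd q := (hadj p q).1 hpq
        by_contra hqv
        exact hne ((Bool.eq_not_of_ne hp).trans (Bool.eq_not_of_ne hqv).symm)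
      have hqp := helper q p hq hpq.symm
      calc Φ.A p q = conj (Φ.A q p) := by
            rw [starRingEnd_apply]; exact (Φ.herm.apply p q).symm
        _ = conj (θ q * conj (θ p)) := by rw [hqp]
        _ = θ p * conj (θ q) := by
            rw [_root_.map_mul, Complex.conj_conj, mul_comm]
  have tele : ∀ (x y : V) (w' : Φ.G.Walk x y),
      (w'.darts.map fun d => Φ.A d.fst d.snd).prod = θ x * conj (θ y) := by
    intro x y w'
    induction w' with
    | nil => rw [SimpleGraph.Walk.darts_nil, List.map_nil, List.prod_nil, hθabs]
    | @cons s t r h p ih =>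
      rw [SimpleGraph.Walk.darts_cons, List.map_cons, List.prod_cons, ih, hA s t h]
      linear_combination (θ s * conj (θ r)) * hθabs t
  show (w.darts.map fun d => Φ.A d.fst d.snd).prod = 1
  rw [tele u u w, hθabs]
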